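/- Let K be a real symmetric N×N matrix with K𝟙 = 0, and suppose all nonzero eigenvalues λ of K satisfy 0 < λ < 2 sin(π/(2(2τ+1))) for an integer delay τ ≥ 1. Then every root z of z^{τ+1} − z^τ + λ = 0 (for each nonzero eigenvalue λ of K) satisfies |z| < 1. -/

import Mathlib

open Real in
set_option maxHeartbeats 1000000 in
theorem stmt_13 (N : ℕ) (τ : ℕ) (hτ : 1 ≤ τ) (K : Matrix (Fin N) (Fin N) ℝ)
    (hsymm : K.IsSymm) (hones : K.mulVec (fun _ => (1 : ℝ)) = 0)
    (heig : ∀ lam : ℝ, (∃ v : Fin N → ℝ, v ≠ 0 ∧ K.mulVec v = lam • v) → lam ≠ 0 →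
      0 < lam ∧ lam < 2 * Real.sin (π / (2 * (2 * (τ : ℝ) + 1)))) :
    ∀ lam : ℝ, (∃ v : Fin N → ℝ, v ≠ 0 ∧ K.mulVec v = lam • v) → lam ≠ 0 →
      ∀ z : ℂ, z ^ (τ + 1) - z ^ τ + (lam : ℂ) = 0 → ‖z‖ < 1 := by
  intro lam hv hne z hz
  obtain ⟨hlam0, hlamΛ⟩ := heig lam hv hne
  by_contra hr1
  push_neg at hr1
  clear hv hones hsymm heig K
  obtain ⟨φ, hφdef⟩ : ∃ φ : ℝ, φ = π / (2 * (2 * (τ : ℝ) + 1)) := ⟨_, rfl⟩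
  rw [← hφdef] at hlamΛ
  obtain ⟨r, hrdef⟩ : ∃ r : ℝ, r = ‖z‖ := ⟨_, rfl⟩
  rw [← hrdef] at hr1
  have hτ1 : (1:ℝ) ≤ (τ:ℝ) := by exact_mod_cast hτ
  have hden : (0:ℝ) < 2 * (2 * (τ:ℝ) + 1) := by nlinarith
  have hφpos : 0 < φ := by rw [hφdef]; exact div_pos Real.pi_pos hden
  have hφle : φ ≤ π / 6 := by
    rw [hφdef]
    exact div_le_div_of_nonneg_left Real.pi_pos.le (by norm_num) (by nlinarith)
  have hsinφ : 0 < Real.sin φ :=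
    Real.sin_pos_of_pos_of_lt_pi hφpos (lt_of_le_of_lt hφle (by linarith [Real.pi_pos]))
  have hz0 : z ≠ 0 := by
    intro h
    rw [hrdef, h] at hr1
    simp at hr1
    linarith
  -- key algebraic form
  have heq : z ^ τ * (z - 1) = -(lam : ℂ) := by linear_combination hz
  have habs : r ^ τ * ‖z - 1‖ = lam := by
    have h := congrArg (fun w : ℂ => ‖w‖) heq
    simp only [norm_mul, norm_pow, ← hrdef] at h
    simpa [abs_of_pos hlam0] using h
  have hrτ : (1:ℝ) ≤ r ^ τ := one_le_pow₀ hr1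
  have hrτ0 : (0:ℝ) < r ^ τ := by linarith
  have hwpos : 0 < ‖z - 1‖ := by
    rcases eq_or_ne z 1 with h | h
    · exfalso
      rw [h] at heq
      simp at heq
      exact hne (by exact_mod_cast heq)
    · exact norm_pos_iff.mpr (sub_ne_zero.mpr h)
  have hs : ‖z - 1‖ ≤ lam := by nlinarith
  -- real/imaginary bookkeeping
  have hr2 : r ^ 2 = z.re ^ 2 + z.im ^ 2 := by
    rw [hrdef, Complex.sq_norm, Complex.normSq_apply]; ring
  have hw2 : ‖z - 1‖ ^ 2 = (z.re - 1) ^ 2 + z.im ^ 2 := by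
    rw [Complex.sq_norm, Complex.normSq_apply]; simp; ring
  have hrele : z.re ≤ r := hrdef ▸ Complex.re_le_norm z
  have hw2le : ‖z - 1‖ ^ 2 ≤ lam ^ 2 := by nlinarith
  have hsq : lam ^ 2 < 4 * Real.sin φ ^ 2 := by nlinarith
  -- cos of arg bound
  have hcos2φ : Real.cos (2 * φ) = 1 - 2 * Real.sin φ ^ 2 := by
    rw [Real.cos_two_mul]
    nlinarith [Real.sin_sq_add_cos_sq φ]
  have hrpos : (0:ℝ) < r := by linarith
  have hA : r ^ 2 + 1 - 2 * z.re ≤ lam ^ 2 := by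
    have h5 : ‖z - 1‖ ^ 2 = r ^ 2 - 2 * z.re + 1 := by
      rw [hw2]; linear_combination -hr2
    linarith [h5 ▸ hw2le]
  have hcosθ : Real.cos (2 * φ) < Real.cos z.arg := by
    rw [Complex.cos_arg hz0, ← hrdef, hcos2φ, lt_div_iff₀ hrpos]
    nlinarith [sq_nonneg (r - 1), mul_nonneg (sub_nonneg.2 hr1) (sq_nonneg (Real.sin φ))]
  have habsargle : |z.arg| ≤ π := Complex.abs_arg_le_pi z
  have h2φle : 2 * φ ≤ π := by linarith [Real.pi_pos]
  have hθ : |z.arg| < 2 * φ := by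
    by_contra h
    push_neg at h
    have := Real.cos_le_cos_of_nonneg_of_le_pi (by positivity) habsargle h
    rw [Real.cos_abs] at this
    linarith
  have hkey : (τ:ℝ) * (2 * φ) = π / 2 - φ := by
    rw [hφdef]; field_simp; ring
  have hτθ : |(τ:ℝ) * z.arg| < π / 2 - φ := by
    rw [abs_mul, abs_of_nonneg (by positivity : (0:ℝ) ≤ (τ:ℝ)), ← hkey]
    have hτpos : (0:ℝ) < (τ:ℝ) := by linarith
    exact (mul_lt_mul_iff_right₀ hτpos).mpr hθ
  have hcosτθ : Real.sin φ < Real.cos ((τ:ℝ) * z.arg) := by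
    have h1 : Real.cos (π / 2 - φ) < Real.cos |(τ:ℝ) * z.arg| := by
      apply Real.cos_lt_cos_of_nonneg_of_le_pi (abs_nonneg _) (by linarith [Real.pi_pos]) hτθ
    rw [Real.cos_abs, Real.cos_pi_div_two_sub] at h1
    exact h1
  -- real part of z^τ
  have hre : (z ^ τ).re = r ^ τ * Real.cos ((τ:ℝ) * z.arg) := by
    have hzeq : z ^ τ = (↑(r ^ τ) : ℂ) * Complex.exp (↑((τ:ℝ) * z.arg) * Complex.I) := by
      rw [hrdef]
      conv_lhs => rw [← Complex.norm_mul_exp_arg_mul_I z]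
      rw [mul_pow, ← Complex.exp_nat_mul]
      push_cast
      ring
    rw [hzeq, Complex.re_ofReal_mul, Complex.exp_ofReal_mul_I_re]
  have hne1 : z - 1 ≠ 0 := by
    intro h
    rw [h] at hwpos; simp at hwpos
  have hzτ : z ^ τ = -(lam : ℂ) / (z - 1) := by
    field_simp
    linear_combination heq
  have hre2 : (z ^ τ).re ≤ lam / 2 := by
    rw [hzτ, Complex.div_re]
    have hnsq : Complex.normSq (z - 1) = (z.re - 1) ^ 2 + z.im ^ 2 := by
      rw [Complex.normSq_apply]; simp; ring
    have hnpos : 0 < Complex.normSq (z - 1) := Complex.normSq_pos.mpr hne1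
    have hre' : (-(lam:ℂ)).re = -lam := by simp
    have him' : (-(lam:ℂ)).im = 0 := by simp
    rw [hre', him', hnsq]
    have hsub : (z - 1).re = z.re - 1 := by simp
    rw [hsub]
    rw [hnsq] at hnpos
    have hr21 : (1:ℝ) ≤ z.re ^ 2 + z.im ^ 2 := by nlinarith
    rw [← add_div, div_le_iff₀ hnpos]
    nlinarith
  -- contradiction
  have hfin : Real.cos ((τ:ℝ) * z.arg) ≤ r ^ τ * Real.cos ((τ:ℝ) * z.arg) := by
    nlinarith
  rw [← hre] at hfin
  nlinarith
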